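/- Let d, m ≥ 1 be integers and let π be a non-crossing ε_d-partition of [2dm]. Then the number of non-crossing ε_d-partitions σ of [2dm] with σ ≤ π is at most (3e)^{2m}, where e = exp(1) is Euler's number. -/

import Mathlib

open Finset

/-- Two elements lie in the same block of the partition `P`. -/
def SameBlock {N : ℕ} (P : Finpartition (univ : Finset (Fin N))) (s t : Fin N) : Prop :=
  ∃ B ∈ P.parts, s ∈ B ∧ t ∈ B

/-- A partition of `[N]` is non-crossing if there are no `s₁ < t₁ < s₂ < t₂` with
`s₁ ∼ s₂`, `t₁ ∼ t₂` but `s₁ ≁ t₁`. -/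
def NonCrossing {N : ℕ} (P : Finpartition (univ : Finset (Fin N))) : Prop :=
  ∀ s₁ t₁ s₂ t₂ : Fin N, s₁ < t₁ → t₁ < s₂ → s₂ < t₂ →
    SameBlock P s₁ s₂ → SameBlock P t₁ t₂ → SameBlock P s₁ t₁

/-- Every block has even cardinality. -/
def EvenPartition {N : ℕ} (P : Finpartition (univ : Finset (Fin N))) : Prop :=
  ∀ B ∈ P.parts, Even B.card

/-- The (two-valued) function `ε` alternates along each block of `P`, listed in
increasing order. -/
def Alternating {N : ℕ} (ε : Fin N → Bool) (P : Finpartition (univ : Finset (Fin N))) : Prop :=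
  ∀ B ∈ P.parts, (Finset.sort B (· ≤ ·)).Chain' (fun a b => ε a ≠ ε b)

/-- An `ε`-partition: an even partition on each block of which `ε` alternates. -/
def EpsPartition {N : ℕ} (ε : Fin N → Bool) (P : Finpartition (univ : Finset (Fin N))) : Prop :=
  EvenPartition P ∧ Alternating ε P

/-- A pairing: every block has exactly two elements. -/
def IsPairing {N : ℕ} (P : Finpartition (univ : Finset (Fin N))) : Prop :=
  ∀ B ∈ P.parts, B.card = 2

/-- `σ` refines `π`: every block of `σ` is contained in a block of `π` (i.e. `σ ≤ π`). -/
def Refines {N : ℕ} (σ π : Finpartition (univ : Finset (Fin N))) : Prop :=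
  ∀ B ∈ σ.parts, ∃ C ∈ π.parts, B ⊆ C

/-- The pattern `ε_d = (1^d ∗^d)^m` on `[2dm]` (0-based; `true` codes `1`, `false` codes `∗`). -/
def epsd (d m : ℕ) : Fin (2*d*m) → Bool := fun j => decide ((j : ℕ) / d % 2 = 0)

/-- `ker I ≥ π` : the function `I` is constant on every block of `π`. -/
def KerGe {N : ℕ} {Λ : Type*} (π : Finpartition (univ : Finset (Fin N))) (I : Fin N → Λ) : Prop :=
  ∀ B ∈ π.parts, ∀ s ∈ B, ∀ t ∈ B, I s = I t

/-- The position `(j-1)d + l` in `[2dm]`, splitting `[2dm]` into `2m` consecutive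
segments of length `d`. -/
def seg (d m : ℕ) (j : Fin (2*m)) (l : Fin d) : Fin (2*d*m) :=
  ⟨j.1 * d + l.1, by
    have hj : j.1 + 1 ≤ 2*m := j.2
    have hl : l.1 < d := l.2
    calc j.1 * d + l.1 < j.1 * d + d := by linarith
      _ = (j.1 + 1) * d := by ring
      _ ≤ (2*m) * d := Nat.mul_le_mul hj (le_refl d)
      _ = 2*d*m := by ring⟩

namespace NCAux

open Finset

variable {N : ℕ}

lemma mem_part' (P : Finpartition (univ : Finset (Fin N))) (x : Fin N) : x ∈ P.part x :=
  P.mem_part (mem_univ x)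

lemma part_mem' (P : Finpartition (univ : Finset (Fin N))) (x : Fin N) : P.part x ∈ P.parts :=
  P.part_mem.2 (mem_univ x)

lemma part_eq_part {P : Finpartition (univ : Finset (Fin N))} {x y : Fin N}
    (h : x ∈ P.part y) : P.part x = P.part y :=
  P.eq_of_mem_parts (part_mem' P x) (part_mem' P y) (mem_part' P x) h

lemma mem_part_symm {P : Finpartition (univ : Finset (Fin N))} {x y : Fin N}
    (h : x ∈ P.part y) : y ∈ P.part x := by
  rw [part_eq_part h]; exact mem_part' P y

lemma sameBlock_iff {P : Finpartition (univ : Finset (Fin N))} {x y : Fin N} :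
    SameBlock P x y ↔ y ∈ P.part x := by
  constructor
  · rintro ⟨B, hB, hx, hy⟩
    rwa [P.part_eq_of_mem hB hx]
  · intro h
    exact ⟨P.part x, part_mem' P x, mem_part' P x, h⟩

/-- `x` is the minimum of its block. -/
def IsMinB (P : Finpartition (univ : Finset (Fin N))) (x : Fin N) : Prop :=
  ∀ y ∈ P.part x, x ≤ y

/-- `x` is the maximum of its block. -/
def IsMaxB (P : Finpartition (univ : Finset (Fin N))) (x : Fin N) : Prop :=
  ∀ y ∈ P.part x, y ≤ x

instance {N : ℕ} (P : Finpartition (univ : Finset (Fin N))) (x : Fin N) :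
    Decidable (IsMinB P x) :=
  decidable_of_iff (∀ y ∈ P.part x, x ≤ y) Iff.rfl

instance {N : ℕ} (P : Finpartition (univ : Finset (Fin N))) (x : Fin N) :
    Decidable (IsMaxB P x) :=
  decidable_of_iff (∀ y ∈ P.part x, y ≤ x) Iff.rfl

/-- `p` and `q` are consecutive elements of a common block. -/
def Adj (P : Finpartition (univ : Finset (Fin N))) (p q : Fin N) : Prop :=
  p ∈ P.part q ∧ p < q ∧ ∀ z ∈ P.part q, ¬(p < z ∧ z < q)

lemma Adj.part_eq {P : Finpartition (univ : Finset (Fin N))} {p q : Fin N}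
    (h : Adj P p q) : P.part p = P.part q := part_eq_part h.1

lemma exists_adj_of_not_isMinB {P : Finpartition (univ : Finset (Fin N))} {x : Fin N}
    (h : ¬ IsMinB P x) : ∃ p, Adj P p x := by
  have hex : ∃ y ∈ P.part x, y < x := by
    by_contra hc
    push_neg at hc
    exact h hc
  obtain ⟨y, hy, hyx⟩ := hex
  have hne : ((P.part x).filter (fun z => z < x)).Nonempty := ⟨y, mem_filter.2 ⟨hy, hyx⟩⟩
  have hpmem := ((P.part x).filter (fun z => z < x)).max'_mem hne
  rw [mem_filter] at hpmem
  refine ⟨_, hpmem.1, hpmem.2, ?_⟩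
  rintro z hz ⟨h1, h2⟩
  have : z ≤ _ := Finset.le_max' ((P.part x).filter (fun z => z < x)) z (mem_filter.2 ⟨hz, h2⟩)
  exact absurd h1 (not_lt.2 this)

lemma exists_adj_of_not_isMaxB {P : Finpartition (univ : Finset (Fin N))} {x : Fin N}
    (h : ¬ IsMaxB P x) : ∃ q, Adj P x q := by
  have hex : ∃ y ∈ P.part x, x < y := by
    by_contra hc
    push_neg at hc
    exact h hc
  obtain ⟨y, hy, hyx⟩ := hex
  have hne : ((P.part x).filter (fun z => x < z)).Nonempty := ⟨y, mem_filter.2 ⟨hy, hyx⟩⟩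
  have hqmem := ((P.part x).filter (fun z => x < z)).min'_mem hne
  rw [mem_filter] at hqmem
  have hpartq : P.part (((P.part x).filter (fun z => x < z)).min' hne) = P.part x :=
    part_eq_part hqmem.1
  refine ⟨_, ?_, hqmem.2, ?_⟩
  · rw [hpartq]; exact mem_part' P x
  · rintro z hz ⟨h1, h2⟩
    rw [hpartq] at hz
    have : _ ≤ z := Finset.min'_le ((P.part x).filter (fun z => x < z)) z
      (mem_filter.2 ⟨hz, h1⟩)
    exact absurd h2 (not_lt.2 this)

lemma adj_unique_left {P : Finpartition (univ : Finset (Fin N))} {p p' x : Fin N}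
    (h : Adj P p x) (h' : Adj P p' x) : p = p' := by
  rcases lt_trichotomy p p' with hlt | heq | hgt
  · exact absurd ⟨hlt, h'.2.1⟩ (h.2.2 p' h'.1)
  · exact heq
  · exact absurd ⟨hgt, h.2.1⟩ (h'.2.2 p h.1)

lemma adj_unique_right {P : Finpartition (univ : Finset (Fin N))} {p q q' : Fin N}
    (h : Adj P p q) (h' : Adj P p q') : q = q' := by
  have hq : q ∈ P.part p := mem_part_symm h.1
  have hq' : q' ∈ P.part p := mem_part_symm h'.1
  rcases lt_trichotomy q q' with hlt | heq | hgt
  · exact absurd ⟨h.2.1, hlt⟩ (h'.2.2 q (h'.part_eq ▸ hq))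
  · exact heq
  · exact absurd ⟨h'.2.1, hgt⟩ (h.2.2 q' (h.part_eq ▸ hq'))

lemma Adj.not_isMaxB {P : Finpartition (univ : Finset (Fin N))} {p q : Fin N}
    (h : Adj P p q) : ¬ IsMaxB P p := by
  intro hm
  have : q ∈ P.part p := mem_part_symm h.1
  exact absurd (hm q this) (not_le.2 h.2.1)

lemma Adj.not_isMinB {P : Finpartition (univ : Finset (Fin N))} {p q : Fin N}
    (h : Adj P p q) : ¬ IsMinB P q := by
  intro hm
  exact absurd (hm p h.1) (not_le.2 h.2.1)

/-- Gap lemma: the open interval between two consecutive elements of a block is a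
union of blocks. -/
lemma gap_lemma {P : Finpartition (univ : Finset (Fin N))} (hNC : NonCrossing P)
    {p q x : Fin N} (h : Adj P p q) (h1 : p < x) (h2 : x < q) :
    ∀ y ∈ P.part x, p < y ∧ y < q := by
  intro y hy
  have hxq : x ∉ P.part q := fun hxq => h.2.2 x hxq ⟨h1, h2⟩
  have hpq : SameBlock P p q := sameBlock_iff.2 (mem_part_symm h.1)
  constructor
  · by_contra hc
    push_neg at hc
    rcases lt_or_eq_of_le hc with hyp | hyp
    · -- y < p : crossing y < p < x < q
      have hyx : SameBlock P y x := sameBlock_iff.2 (mem_part_symm hy)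
      have := hNC y p x q hyp h1 h2 hyx hpq
      rw [sameBlock_iff] at this
      -- p ∈ part y = part x, so x ∈ part q, contradiction
      have : P.part y = P.part p := part_eq_part (mem_part_symm this)
      have hxp : x ∈ P.part p := by
        rw [← this, part_eq_part hy]; exact mem_part' P x
      rw [h.part_eq] at hxp
      exact hxq hxp
    · -- y = p
      subst hyp
      have hxp : x ∈ P.part y := mem_part_symm hy
      rw [h.part_eq] at hxp
      exact hxq hxp
  · by_contra hc
    push_neg at hc
    rcases lt_or_eq_of_le hc with hyq | hyq
    · -- q < y : crossing p < x < q < y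
      have hxy : SameBlock P x y := sameBlock_iff.2 hy
      have hsb := hNC p x q y h1 h2 hyq hpq hxy
      rw [sameBlock_iff] at hsb
      rw [h.part_eq] at hsb
      exact hxq hsb
    · -- y = q
      subst hyq
      exact hxq (mem_part_symm hy)


section Uniqueness

variable {σ σ' : Finpartition (univ : Finset (Fin N))}

lemma adj_aux (hσ : NonCrossing σ)
    (hmin : ∀ x, IsMinB σ x ↔ IsMinB σ' x) (hmax : ∀ x, IsMaxB σ x ↔ IsMaxB σ' x)
    {n : ℕ}
    (hIH : ∀ y : Fin N, y.val < n → ∀ a a' : Fin N, Adj σ a y → Adj σ' a' y → a = a')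
    {x p p' : Fin N} (hxn : x.val ≤ n) (h : Adj σ p x) (h' : Adj σ' p' x)
    (hpp : p < p') : False := by
  have hp'x : p' < x := h'.2.1
  have hnmax : ¬ IsMaxB σ p' := by
    rw [hmax]
    intro hm
    have : x ∈ σ'.part p' := mem_part_symm h'.1
    exact absurd (hm x this) (not_le.2 hp'x)
  obtain ⟨q, hq⟩ := exists_adj_of_not_isMaxB hnmax
  rcases lt_trichotomy q x with hqx | hqx | hqx
  · -- q < x
    have hq' : ¬ IsMinB σ' q := by rw [← hmin]; exact hq.not_isMinB
    obtain ⟨a', ha'⟩ := exists_adj_of_not_isMinB hq'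
    have : p' = a' := hIH q (lt_of_lt_of_le hqx hxn) p' a' hq ha'
    subst this
    exact absurd (adj_unique_right ha' h') (ne_of_lt hqx)
  · -- q = x : p and p' both adjacent-below x in σ
    subst hqx
    exact absurd (adj_unique_left h hq) (ne_of_lt hpp)
  · -- q > x : contradicts gap lemma
    have hgap := gap_lemma hσ h hpp hp'x
    have hqmem : q ∈ σ.part p' := mem_part_symm hq.1
    exact absurd (hgap q hqmem).2 (not_lt.2 hqx.le)

lemma adj_eq_of_same_stubs (hσ : NonCrossing σ) (hσ' : NonCrossing σ')
    (hmin : ∀ x, IsMinB σ x ↔ IsMinB σ' x) (hmax : ∀ x, IsMaxB σ x ↔ IsMaxB σ' x) :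
    ∀ (n : ℕ) (x p p' : Fin N), x.val ≤ n → Adj σ p x → Adj σ' p' x → p = p' := by
  intro n
  induction n using Nat.strong_induction_on with
  | _ n IH =>
    intro x p p' hxn h h'
    have hIH : ∀ y : Fin N, y.val < n → ∀ a a' : Fin N, Adj σ a y → Adj σ' a' y → a = a' :=
      fun y hy a a' ha ha' => IH y.val hy y a a' le_rfl ha ha'
    have hIH' : ∀ y : Fin N, y.val < n → ∀ a a' : Fin N, Adj σ' a y → Adj σ a' y → a = a' :=
      fun y hy a a' ha ha' => (hIH y hy a' a ha' ha).symm
    rcases lt_trichotomy p p' with hpp | hpp | hpp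
    · exact absurd (adj_aux hσ hmin hmax hIH hxn h h' hpp) not_false
    · exact hpp
    · exact absurd (adj_aux hσ' (fun x => (hmin x).symm) (fun x => (hmax x).symm)
        hIH' hxn h' h hpp) not_false

lemma mem_part_trans {P : Finpartition (univ : Finset (Fin N))} {x y z : Fin N}
    (h1 : y ∈ P.part x) (h2 : z ∈ P.part y) : z ∈ P.part x := by
  rwa [part_eq_part h1] at h2

lemma part_subset_of_same_stubs (hσ : NonCrossing σ) (hσ' : NonCrossing σ')
    (hmin : ∀ x, IsMinB σ x ↔ IsMinB σ' x) (hmax : ∀ x, IsMaxB σ x ↔ IsMaxB σ' x) :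
    ∀ (n : ℕ) (y x : Fin N), y.val ≤ n → x ≤ y → y ∈ σ.part x → y ∈ σ'.part x := by
  intro n
  induction n using Nat.strong_induction_on with
  | _ n IH =>
    intro y x hyn hxy hmem
    rcases eq_or_lt_of_le hxy with heq | hlt
    · subst heq; exact mem_part' σ' x
    · -- x < y
      have hnmin : ¬ IsMinB σ y := fun hm => absurd (hm x (mem_part_symm hmem)) (not_le.2 hlt)
      obtain ⟨p, hp⟩ := exists_adj_of_not_isMinB hnmin
      have hnmin' : ¬ IsMinB σ' y := by rw [← hmin]; exact hnmin
      obtain ⟨p', hp'⟩ := exists_adj_of_not_isMinB hnmin'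
      have hpe : p = p' := adj_eq_of_same_stubs hσ hσ' hmin hmax n y p p' hyn hp hp'
      subst hpe
      have hxp : x ≤ p := by
        by_contra hc
        push_neg at hc
        exact hp.2.2 x (mem_part_symm hmem) ⟨hc, hlt⟩
      rcases eq_or_lt_of_le hxp with hxpe | hxplt
      · subst hxpe
        exact mem_part_symm hp'.1
      · have hpmem : p ∈ σ.part x := mem_part_trans hmem hp.1
        have hpval : p.val < n := lt_of_lt_of_le hp.2.1 hyn
        have hp'x : p ∈ σ'.part x := IH p.val hpval p x le_rfl hxp hpmem
        exact mem_part_trans hp'x (mem_part_symm hp'.1)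

lemma parts_subset_of_same_stubs (hσ : NonCrossing σ) (hσ' : NonCrossing σ')
    (hmin : ∀ x, IsMinB σ x ↔ IsMinB σ' x) (hmax : ∀ x, IsMaxB σ x ↔ IsMaxB σ' x)
    (hsub : ∀ (y x : Fin N), x ≤ y → y ∈ σ'.part x → y ∈ σ.part x) :
    σ.parts ⊆ σ'.parts := by
  intro B hB
  obtain ⟨x₀, hx₀⟩ := σ.nonempty_of_mem_parts hB
  have hBeq : B = σ.part x₀ := (σ.part_eq_of_mem hB hx₀).symm
  suffices h : σ.part x₀ = σ'.part x₀ by rw [hBeq, h]; exact part_mem' σ' x₀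
  apply Finset.Subset.antisymm <;> intro y hy
  · rcases le_or_gt x₀ y with hle | hlt
    · exact part_subset_of_same_stubs hσ hσ' hmin hmax y.val y x₀ le_rfl hle hy
    · exact mem_part_symm
        (part_subset_of_same_stubs hσ hσ' hmin hmax x₀.val x₀ y le_rfl hlt.le
          (mem_part_symm hy))
  · rcases le_or_gt x₀ y with hle | hlt
    · exact hsub y x₀ hle hy
    · exact mem_part_symm (hsub x₀ y hlt.le (mem_part_symm hy))

lemma eq_of_same_stubs (hσ : NonCrossing σ) (hσ' : NonCrossing σ')
    (hmin : ∀ x, IsMinB σ x ↔ IsMinB σ' x) (hmax : ∀ x, IsMaxB σ x ↔ IsMaxB σ' x) :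
    σ = σ' := by
  have hmin' : ∀ x, IsMinB σ' x ↔ IsMinB σ x := fun x => (hmin x).symm
  have hmax' : ∀ x, IsMaxB σ' x ↔ IsMaxB σ x := fun x => (hmax x).symm
  have hsub : ∀ (y x : Fin N), x ≤ y → y ∈ σ.part x → y ∈ σ'.part x :=
    fun y x hxy hm => part_subset_of_same_stubs hσ hσ' hmin hmax y.val y x le_rfl hxy hm
  have hsub' : ∀ (y x : Fin N), x ≤ y → y ∈ σ'.part x → y ∈ σ.part x :=
    fun y x hxy hm => part_subset_of_same_stubs hσ' hσ hmin' hmax' y.val y x le_rfl hxy hm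
  have h1 := parts_subset_of_same_stubs hσ hσ' hmin hmax hsub'
  have h2 := parts_subset_of_same_stubs hσ' hσ hmin' hmax' hsub
  exact Finpartition.ext (Finset.Subset.antisymm h1 h2)

end Uniqueness

variable {α : Type*} [LinearOrder α]

/-- From the chain'-alternation on the sorted list, consecutive elements of a finset
have different `ε`-values. -/
lemma consec_ne_of_chain' {ε : α → Bool} {B : Finset α}
    (h : (Finset.sort B (· ≤ ·)).Chain' (fun a b => ε a ≠ ε b))
    {x y : α} (hx : x ∈ B) (hy : y ∈ B) (hxy : x < y)
    (hbtw : ∀ z ∈ B, ¬(x < z ∧ z < y)) : ε x ≠ ε y := by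
  set L := Finset.sort B (· ≤ ·) with hL
  have hsort : L.Pairwise (· < ·) := (Finset.sortedLT_sort B).pairwise
  have hxL : x ∈ L := (Finset.mem_sort _).2 hx
  have hyL : y ∈ L := (Finset.mem_sort _).2 hy
  obtain ⟨i, hix⟩ := List.get_of_mem hxL
  obtain ⟨j, hjy⟩ := List.get_of_mem hyL
  have hij : i < j := by
    rcases lt_trichotomy i j with h' | h' | h'
    · exact h'
    · rw [h', hjy] at hix; exact absurd hix (ne_of_gt hxy)
    · have := hsort.rel_get_of_lt h'
      rw [hix, hjy] at this
      exact absurd (lt_trans hxy this) (lt_irrefl x)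
  have hji : (j : ℕ) = (i : ℕ) + 1 := by
    by_contra hne
    have hi1 : (i : ℕ) + 1 < (j : ℕ) := by
      have := hij
      rw [Fin.lt_def] at this
      omega
    have hi1len : (i : ℕ) + 1 < L.length := lt_trans hi1 j.2
    set z := L.get ⟨(i : ℕ) + 1, hi1len⟩ with hz
    have hzB : z ∈ B := (Finset.mem_sort _).1 (List.get_mem L ⟨_, hi1len⟩)
    have h1 : x < z := by
      rw [← hix]
      exact hsort.rel_get_of_lt (by rw [Fin.lt_def]; exact Nat.lt_succ_self _)
    have h2 : z < y := by
      rw [← hjy]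
      exact hsort.rel_get_of_lt (by rw [Fin.lt_def]; exact hi1)
    exact hbtw z hzB ⟨h1, h2⟩
  have hlen : (i : ℕ) + 1 < L.length := by have := j.2; omega
  have hchain := List.isChain_iff_getElem.1 h (i : ℕ) (by omega)
  have hj' : j = ⟨(i : ℕ) + 1, hlen⟩ := Fin.ext hji
  rw [← hix, ← hjy, hj']
  exact hchain




/-- Number of switches of `ε` on `[a, b)` (pairs `x, x+1` both in the interval). -/
def sw (ε : ℕ → Bool) (a b : ℕ) : ℕ := ((Ico a (b-1)).filter (fun x => ε x ≠ ε (x+1))).card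

lemma eps_const (ε : ℕ → Bool) : ∀ (k a : ℕ), (∀ x ∈ Ico a (a+k), ε x = ε (x+1)) →
    ε a = ε (a+k) := by
  intro k
  induction k with
  | zero => intro a _; rfl
  | succ k IH =>
    intro a h
    have h1 : ε a = ε (a+1) := h a (mem_Ico.2 ⟨le_rfl, by omega⟩)
    have h2 : ε (a+1) = ε (a+1+k) := by
      apply IH
      intro x hx
      rw [mem_Ico] at hx
      exact h x (mem_Ico.2 ⟨by omega, by omega⟩)
    rw [h1, h2]; congr 1; omega

lemma exists_switch (ε : ℕ → Bool) {a c : ℕ} (hac : a ≤ c) (h : ε a ≠ ε c) :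
    ∃ x ∈ Ico a c, ε x ≠ ε (x+1) := by
  by_contra hc
  push_neg at hc
  obtain ⟨k, rfl⟩ := Nat.exists_eq_add_of_le hac
  exact h (eps_const ε k a hc)

lemma sw_split (ε : ℕ → Bool) {a w b : ℕ} (h1 : a ≤ w) (h2 : w < b) :
    sw ε a b = ((Ico a w).filter (fun x => ε x ≠ ε (x+1))).card + sw ε w b := by
  unfold sw
  rw [← card_union_of_disjoint, ← filter_union, Finset.Ico_union_Ico_eq_Ico h1 (by omega)]
  exact disjoint_filter_filter (Finset.Ico_disjoint_Ico_consecutive a w (b-1))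

theorem budget (ε : ℕ → Bool) :
    ∀ (n a b : ℕ), b ≤ a + n →
    ∀ F : Finset (Finset ℕ),
      (∀ B ∈ F, B ⊆ Ico a b) →
      (∀ x ∈ Ico a b, ∃ B ∈ F, x ∈ B) →
      (∀ B ∈ F, ∀ C ∈ F, ∀ x : ℕ, x ∈ B → x ∈ C → B = C) →
      (∀ B ∈ F, 2 ≤ B.card) →
      (∀ B ∈ F, ∀ x ∈ B, ∀ y ∈ B, x < y → (∀ z ∈ B, ¬(x < z ∧ z < y)) → ε x ≠ ε y) →
      (∀ s₁ t₁ s₂ t₂ : ℕ, s₁ < t₁ → t₁ < s₂ → s₂ < t₂ →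
        (∃ B ∈ F, s₁ ∈ B ∧ s₂ ∈ B) → (∃ B ∈ F, t₁ ∈ B ∧ t₂ ∈ B) →
        (∃ B ∈ F, s₁ ∈ B ∧ t₁ ∈ B)) →
      F.Nonempty →
      (∑ B ∈ F, (B.card - 2)) + 1 ≤ sw ε a b := by
  intro n
  induction n with
  | zero =>
    intro a b hb F hsub _ _ hcard _ _ hne
    obtain ⟨B, hB⟩ := hne
    have h2 := hcard B hB
    obtain ⟨x, hx⟩ := Finset.card_pos.1 (show 0 < B.card by omega)
    have hxI : a ≤ x ∧ x < b := mem_Ico.1 (hsub B hB hx)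
    omega
  | succ n IH =>
    intro a b hb F hsub hcover huniq hcard halt hnc hFne
    classical
    obtain ⟨B₀, hB₀⟩ := hFne
    obtain ⟨x₀, hx₀⟩ := Finset.card_pos.1 (show 0 < B₀.card by have := hcard B₀ hB₀; omega)
    have hab : a < b := by have := mem_Ico.1 (hsub B₀ hB₀ hx₀); omega
    -- the block V containing a
    obtain ⟨V, hV, haV⟩ := hcover a (mem_Ico.2 ⟨le_rfl, hab⟩)
    have hVsub := hsub V hV
    have hVlb : ∀ v ∈ V, a ≤ v := fun v hv => (mem_Ico.1 (hVsub hv)).1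
    have hVub : ∀ v ∈ V, v < b := fun v hv => (mem_Ico.1 (hVsub hv)).2
    have hVe : (V.erase a).Nonempty := by
      rw [← Finset.card_pos, Finset.card_erase_of_mem haV]
      have := hcard V hV; omega
    obtain ⟨w, hwV', hwmin⟩ : ∃ w ∈ V.erase a, ∀ z ∈ V.erase a, w ≤ z :=
      ⟨(V.erase a).min' hVe, Finset.min'_mem _ hVe, fun z hz => Finset.min'_le _ z hz⟩
    have hwV : w ∈ V := Finset.mem_of_mem_erase hwV'
    have hwa : a < w := lt_of_le_of_ne (hVlb w hwV) (Ne.symm (Finset.ne_of_mem_erase hwV'))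
    have hwb : w < b := hVub w hwV
    have hbetween : ∀ z ∈ V, ¬(a < z ∧ z < w) := by
      rintro z hz ⟨h1, h2⟩
      have : w ≤ z := hwmin z (Finset.mem_erase.2 ⟨by omega, hz⟩)
      omega
    have heps : ε a ≠ ε w := halt V hV a haV w hwV hwa hbetween
    -- any other block lies entirely in the gap (a,w) or entirely beyond w
    have hnotV : ∀ B ∈ F, B ≠ V → ∀ x ∈ B, a < x ∧ x ≠ w := by
      intro B hB hBV x hx
      have h1 : a ≤ x := (mem_Ico.1 (hsub B hB hx)).1
      constructor
      · rcases eq_or_lt_of_le h1 with h | h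
        · exact absurd (huniq B hB V hV x hx (h ▸ haV)) hBV
        · exact h
      · intro h
        exact hBV (huniq B hB V hV x hx (h ▸ hwV))
    have hclass : ∀ B ∈ F, B ≠ V → (∀ x ∈ B, a < x ∧ x < w) ∨ (∀ x ∈ B, w < x) := by
      intro B hB hBV
      by_cases hex : ∃ x ∈ B, x < w
      · left
        obtain ⟨x, hxB, hxw⟩ := hex
        intro y hyB
        have hy := hnotV B hB hBV y hyB
        refine ⟨hy.1, ?_⟩
        by_contra hyw
        push_neg at hyw
        have hywlt : w < y := lt_of_le_of_ne hyw (Ne.symm hy.2)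
        have hx := hnotV B hB hBV x hxB
        -- crossing: a < x < w < y with a ∼ w (V), x ∼ y (B)
        obtain ⟨B', hB', haB', hxB'⟩ := hnc a x w y hx.1 hxw hywlt
          ⟨V, hV, haV, hwV⟩ ⟨B, hB, hxB, hyB⟩
        have : B' = V := huniq B' hB' V hV a haB' haV
        subst this
        exact absurd (huniq B hB B' hB' x hxB hxB') hBV
      · right
        push_neg at hex
        intro x hx
        exact lt_of_le_of_ne (hex x hx) (Ne.symm (hnotV B hB hBV x hx).2)
    set FG := F.filter (fun B => ∀ x ∈ B, a < x ∧ x < w) with hFGdef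
    set FR := F.filter (fun B => ∀ x ∈ B, w < x) with hFRdef
    have hVnG : V ∉ FG := by
      intro h
      exact absurd ((Finset.mem_filter.1 h).2 a haV).1 (lt_irrefl a)
    have hVnR : V ∉ FR := by
      intro h
      have := (Finset.mem_filter.1 h).2 a haV
      omega
    have hGRdisj : Disjoint FG FR := by
      rw [Finset.disjoint_left]
      intro B hBG hBR
      have h2 := hcard B (Finset.mem_filter.1 hBG).1
      obtain ⟨x, hx⟩ := Finset.card_pos.1 (show 0 < B.card by omega)
      have := ((Finset.mem_filter.1 hBG).2 x hx).2
      have := (Finset.mem_filter.1 hBR).2 x hx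
      omega
    have herase : F.erase V = FG ∪ FR := by
      ext B
      simp only [Finset.mem_erase, Finset.mem_union, hFGdef, hFRdef, Finset.mem_filter]
      constructor
      · rintro ⟨hBV, hB⟩
        rcases hclass B hB hBV with h | h
        · exact Or.inl ⟨hB, h⟩
        · exact Or.inr ⟨hB, h⟩
      · rintro (⟨hB, h⟩ | ⟨hB, h⟩)
        · refine ⟨?_, hB⟩; rintro rfl; exact absurd (h a haV).1 (lt_irrefl a)
        · refine ⟨?_, hB⟩; rintro rfl; have := h a haV; omega
    have hsum : (∑ B ∈ F, (B.card - 2)) =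
        (V.card - 2) + ((∑ B ∈ FG, (B.card - 2)) + (∑ B ∈ FR, (B.card - 2))) := by
      rw [← Finset.add_sum_erase _ (fun B => B.card - 2) hV, herase,
        Finset.sum_union hGRdisj]
    -- the switch count in the initial stretch
    obtain ⟨S1, hS1def⟩ : ∃ S1, S1 = ((Ico a w).filter (fun x => ε x ≠ ε (x+1))).card :=
      ⟨_, rfl⟩
    have hS1pos : 1 ≤ S1 := by
      rw [hS1def]
      obtain ⟨x, hx1, hx2⟩ := exists_switch ε hwa.le heps
      exact Finset.card_pos.2 ⟨x, Finset.mem_filter.2 ⟨hx1, hx2⟩⟩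
    have hswsplit : sw ε a b = S1 + sw ε w b := by rw [hS1def]; exact sw_split ε hwa.le hwb
    -- gap recursion
    have hGfin : (∑ B ∈ FG, (B.card - 2)) + 1 ≤ S1 := by
      rcases Finset.eq_empty_or_nonempty FG with hFG | hFG
      · rw [hFG]; simpa using hS1pos
      · have hrec := IH (a+1) w (by omega) FG
          (fun B hB x hx => mem_Ico.2 (by
            have := (Finset.mem_filter.1 hB).2 x hx; omega))
          (fun x hx => by
            rw [mem_Ico] at hx
            obtain ⟨B, hB, hxB⟩ := hcover x (mem_Ico.2 ⟨by omega, by omega⟩)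
            have hBV : B ≠ V := by
              rintro rfl
              exact hbetween x hxB ⟨by omega, hx.2⟩
            rcases hclass B hB hBV with h | h
            · exact ⟨B, Finset.mem_filter.2 ⟨hB, h⟩, hxB⟩
            · have := h x hxB; omega)
          (fun B hB C hC x hx hx' => huniq B (Finset.mem_filter.1 hB).1
              C (Finset.mem_filter.1 hC).1 x hx hx')
          (fun B hB => hcard B (Finset.mem_filter.1 hB).1)
          (fun B hB => halt B (Finset.mem_filter.1 hB).1)
          (fun s₁ t₁ s₂ t₂ h1 h2 h3 hs ht => by
            obtain ⟨B, hB, hsB⟩ := hs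
            obtain ⟨C, hC, htC⟩ := ht
            obtain ⟨D, hD, hsD⟩ := hnc s₁ t₁ s₂ t₂ h1 h2 h3
              ⟨B, (Finset.mem_filter.1 hB).1, hsB⟩ ⟨C, (Finset.mem_filter.1 hC).1, htC⟩
            have hDB : D = B := huniq D hD B (Finset.mem_filter.1 hB).1 s₁ hsD.1 hsB.1
            exact ⟨D, hDB ▸ hB, hsD⟩)
          hFG
        have hmono : sw ε (a+1) w ≤ S1 := by
          rw [hS1def]
          apply Finset.card_le_card
          apply Finset.filter_subset_filter
          intro x hx
          rw [mem_Ico] at hx ⊢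
          omega
        omega
    -- rest recursion: case on the size of V
    have h2V := hcard V hV
    rcases eq_or_lt_of_le h2V with hV2 | hV3
    · -- V.card = 2, so V = {a, w}
      have hVaw : V = {a, w} := by
        apply Finset.eq_of_subset_of_card_le
        · intro x hx
          by_contra hc
          simp only [Finset.mem_insert, Finset.mem_singleton] at hc
          push_neg at hc
          have h1 : a < x := lt_of_le_of_ne (hVlb x hx) (Ne.symm hc.1)
          rcases lt_trichotomy x w with h | h | h
          · exact hbetween x hx ⟨h1, h⟩
          · exact hc.2 h
          · -- x > w : then {a, w, x} ⊆ V contradicts card = 2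
            have : ({a, w, x} : Finset ℕ) ⊆ V := by
              intro y hy
              simp only [Finset.mem_insert, Finset.mem_singleton] at hy
              rcases hy with rfl | rfl | rfl <;> assumption
            have hcard3 : ({a, w, x} : Finset ℕ).card = 3 := by
              rw [Finset.card_insert_of_notMem, Finset.card_insert_of_notMem,
                Finset.card_singleton]
              · simp only [Finset.mem_singleton]; omega
              · simp only [Finset.mem_insert, Finset.mem_singleton]; push_neg
                constructor <;> omega
            have := Finset.card_le_card this
            omega
        · have h1 : ({a, w} : Finset ℕ).card ≤ 2 :=
            le_trans (Finset.card_insert_le _ _) (by simp)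
          omega
      have hRfin : (∑ B ∈ FR, (B.card - 2)) ≤ sw ε w b := by
        rcases Finset.eq_empty_or_nonempty FR with hFR | hFR
        · simp [hFR]
        · have hrec := IH (w+1) b (by omega) FR
            (fun B hB x hx => mem_Ico.2 ⟨by
                have := (Finset.mem_filter.1 hB).2 x hx; omega,
              (mem_Ico.1 (hsub B (Finset.mem_filter.1 hB).1 hx)).2⟩)
            (fun x hx => by
              rw [mem_Ico] at hx
              obtain ⟨B, hB, hxB⟩ := hcover x (mem_Ico.2 ⟨by omega, hx.2⟩)
              have hBV : B ≠ V := by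
                rintro rfl
                rw [hVaw] at hxB
                simp only [Finset.mem_insert, Finset.mem_singleton] at hxB
                omega
              rcases hclass B hB hBV with h | h
              · have := (h x hxB).2; omega
              · exact ⟨B, Finset.mem_filter.2 ⟨hB, h⟩, hxB⟩)
            (fun B hB C hC x hx hx' => huniq B (Finset.mem_filter.1 hB).1
                C (Finset.mem_filter.1 hC).1 x hx hx')
            (fun B hB => hcard B (Finset.mem_filter.1 hB).1)
            (fun B hB => halt B (Finset.mem_filter.1 hB).1)
            (fun s₁ t₁ s₂ t₂ h1 h2 h3 hs ht => by
              obtain ⟨B, hB, hsB⟩ := hs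
              obtain ⟨C, hC, htC⟩ := ht
              obtain ⟨D, hD, hsD⟩ := hnc s₁ t₁ s₂ t₂ h1 h2 h3
                ⟨B, (Finset.mem_filter.1 hB).1, hsB⟩ ⟨C, (Finset.mem_filter.1 hC).1, htC⟩
              have hDB : D = B := huniq D hD B (Finset.mem_filter.1 hB).1 s₁ hsD.1 hsB.1
              exact ⟨D, hDB ▸ hB, hsD⟩)
            hFR
          have hmono : sw ε (w+1) b ≤ sw ε w b := by
            apply Finset.card_le_card
            apply Finset.filter_subset_filter
            intro x hx
            rw [mem_Ico] at hx ⊢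
            omega
          omega
      omega
    · -- 3 ≤ V.card
      have hV'card : (V.erase a).card = V.card - 1 := Finset.card_erase_of_mem haV
      have hwV'' : w ∈ V.erase a := hwV'
      have hV'mem : ∀ x ∈ V.erase a, w ≤ x ∧ x < b := by
        intro x hx
        have hxV : x ∈ V := Finset.mem_of_mem_erase hx
        have hxa : a < x := lt_of_le_of_ne (hVlb x hxV) (Ne.symm (Finset.ne_of_mem_erase hx))
        have hxw : ¬(a < x ∧ x < w) := hbetween x hxV
        exact ⟨by omega, hVub x hxV⟩
      have hV'nR : V.erase a ∉ FR := by
        intro h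
        have := (Finset.mem_filter.1 h).2 w hwV''
        omega
      have hVinsub : ∀ B ∈ insert (V.erase a) FR, B ⊆ Ico w b := by
        intro B hB
        rcases Finset.mem_insert.1 hB with rfl | hB
        · intro x hx
          have := hV'mem x hx
          exact mem_Ico.2 ⟨this.1, this.2⟩
        · intro x hx
          have h1 := (Finset.mem_filter.1 hB).2 x hx
          have h2 := (mem_Ico.1 (hsub B (Finset.mem_filter.1 hB).1 hx)).2
          exact mem_Ico.2 ⟨by omega, h2⟩
      have hrec := IH w b (by omega) (insert (V.erase a) FR)
        hVinsub
        (fun x hx => by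
          rw [mem_Ico] at hx
          rcases eq_or_lt_of_le hx.1 with rfl | hwx
          · exact ⟨V.erase a, Finset.mem_insert_self _ _, hwV''⟩
          · obtain ⟨B, hB, hxB⟩ := hcover x (mem_Ico.2 ⟨by omega, hx.2⟩)
            by_cases hBV : B = V
            · subst hBV
              exact ⟨B.erase a, Finset.mem_insert_self _ _,
                Finset.mem_erase.2 ⟨by omega, hxB⟩⟩
            · rcases hclass B hB hBV with h | h
              · have := (h x hxB).2; omega
              · exact ⟨B, Finset.mem_insert_of_mem (Finset.mem_filter.2 ⟨hB, h⟩), hxB⟩)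
        (fun B hB C hC x hx hx' => by
          rcases Finset.mem_insert.1 hB with rfl | hBR <;>
            rcases Finset.mem_insert.1 hC with hC' | hCR
          · exact hC'.symm
          · exfalso
            have hxV : x ∈ V := Finset.mem_of_mem_erase hx
            have : V = C := huniq V hV C (Finset.mem_filter.1 hCR).1 x hxV hx'
            subst this
            exact hVnR hCR
          · exfalso
            rw [hC'] at hx'
            have hxV : x ∈ V := Finset.mem_of_mem_erase hx'
            have : V = B := huniq V hV B (Finset.mem_filter.1 hBR).1 x hxV hx
            subst this
            exact hVnR hBR
          · exact huniq B (Finset.mem_filter.1 hBR).1 C (Finset.mem_filter.1 hCR).1 x hx hx')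
        (fun B hB => by
          rcases Finset.mem_insert.1 hB with rfl | hBR
          · omega
          · exact hcard B (Finset.mem_filter.1 hBR).1)
        (fun B hB x hx y hy hxy hbtw => by
          rcases Finset.mem_insert.1 hB with rfl | hBR
          · have hxV : x ∈ V := Finset.mem_of_mem_erase hx
            have hyV : y ∈ V := Finset.mem_of_mem_erase hy
            apply halt V hV x hxV y hyV hxy
            intro z hz hzb
            have hza : a < z := by
              have := hVlb x hxV
              have hwx := hV'mem x hx
              omega
            exact hbtw z (Finset.mem_erase.2 ⟨by omega, hz⟩) hzb
          · exact halt B (Finset.mem_filter.1 hBR).1 x hx y hy hxy hbtw)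
        (fun s₁ t₁ s₂ t₂ h1 h2 h3 hs ht => by
          obtain ⟨B, hB, hsB⟩ := hs
          obtain ⟨C, hC, htC⟩ := ht
          have hws : w ≤ s₁ := (mem_Ico.1 (hVinsub B hB hsB.1)).1
          have hsF : ∃ B ∈ F, s₁ ∈ B ∧ s₂ ∈ B := by
            rcases Finset.mem_insert.1 hB with rfl | hBR
            · exact ⟨V, hV, Finset.mem_of_mem_erase hsB.1, Finset.mem_of_mem_erase hsB.2⟩
            · exact ⟨B, (Finset.mem_filter.1 hBR).1, hsB⟩
          have htF : ∃ B ∈ F, t₁ ∈ B ∧ t₂ ∈ B := by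
            rcases Finset.mem_insert.1 hC with rfl | hCR
            · exact ⟨V, hV, Finset.mem_of_mem_erase htC.1, Finset.mem_of_mem_erase htC.2⟩
            · exact ⟨C, (Finset.mem_filter.1 hCR).1, htC⟩
          obtain ⟨D, hD, hs1D, ht1D⟩ := hnc s₁ t₁ s₂ t₂ h1 h2 h3 hsF htF
          by_cases hDV : D = V
          · subst hDV
            exact ⟨D.erase a, Finset.mem_insert_self _ _,
              Finset.mem_erase.2 ⟨by omega, hs1D⟩, Finset.mem_erase.2 ⟨by omega, ht1D⟩⟩
          · rcases hclass D hD hDV with h | h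
            · have := (h s₁ hs1D).2; omega
            · exact ⟨D, Finset.mem_insert_of_mem (Finset.mem_filter.2 ⟨hD, h⟩), hs1D, ht1D⟩)
        (Finset.insert_nonempty _ _)
      rw [Finset.sum_insert hV'nR] at hrec
      omega


lemma sw_epsd (d m : ℕ) (hd : 1 ≤ d) (hm : 1 ≤ m) :
    sw (fun n => decide (n / d % 2 = 0)) 0 (2*d*m) ≤ 2*m - 1 := by
  have hcard : (Ico 1 (2*m)).card = 2*m - 1 := by rw [Nat.card_Ico]
  rw [← hcard]
  unfold sw
  apply Finset.card_le_card_of_injOn (fun x => (x+1)/d)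
  · intro x hx
    rw [Finset.mem_coe, Finset.mem_filter, mem_Ico] at hx
    obtain ⟨⟨_, hxN⟩, hne⟩ := hx
    have hdvd : d ∣ (x+1) := by
      by_contra hdvd
      apply hne
      show decide (x / d % 2 = 0) = decide ((x+1) / d % 2 = 0)
      rw [Nat.succ_div, if_neg hdvd, Nat.add_zero]
    have hdiv : d * ((x+1)/d) = x + 1 := Nat.mul_div_cancel' hdvd
    rw [Finset.mem_coe, mem_Ico]
    constructor
    · rw [Nat.one_le_div_iff (by omega)]
      exact Nat.le_of_dvd (by omega) hdvd
    · by_contra hc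
      push_neg at hc
      have h1 : d * (2*m) ≤ d * ((x+1)/d) := Nat.mul_le_mul_left d hc
      have h2 : d * (2*m) = 2*d*m := by ring
      omega
  · intro x hx y hy hxy
    rw [Finset.mem_coe, Finset.mem_filter, mem_Ico] at hx hy
    have hdx : d ∣ (x+1) := by
      by_contra hdvd
      apply hx.2
      show decide (x / d % 2 = 0) = decide ((x+1) / d % 2 = 0)
      rw [Nat.succ_div, if_neg hdvd, Nat.add_zero]
    have hdy : d ∣ (y+1) := by
      by_contra hdvd
      apply hy.2
      show decide (y / d % 2 = 0) = decide ((y+1) / d % 2 = 0)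
      rw [Nat.succ_div, if_neg hdvd, Nat.add_zero]
    have h1 : d * ((x+1)/d) = x + 1 := Nat.mul_div_cancel' hdx
    have h2 : d * ((y+1)/d) = y + 1 := Nat.mul_div_cancel' hdy
    have hxy' : (x+1)/d = (y+1)/d := hxy
    have : x + 1 = y + 1 := by rw [← h1, ← h2, hxy']
    omega


/-- Transport the budget inequality to a non-crossing `ε_d`-partition of `Fin (2dm)`. -/
lemma parts_sum_le (d m : ℕ) (hd : 1 ≤ d) (hm : 1 ≤ m)
    (π : Finpartition (univ : Finset (Fin (2*d*m))))
    (hNC : NonCrossing π) (hπ : EpsPartition (epsd d m) π) :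
    (∑ B ∈ π.parts, (B.card - 2)) + 1 ≤ 2*m - 1 := by
  classical
  have hN2 : 2 ≤ 2*d*m := by nlinarith
  have himg_inj : Function.Injective (fun B : Finset (Fin (2*d*m)) => B.image Fin.val) :=
    Finset.image_injective Fin.val_injective
  have hkey := budget (fun n => decide (n / d % 2 = 0)) (2*d*m) 0 (2*d*m) (by omega)
    (π.parts.image (fun B => B.image Fin.val))
    (by -- subsets
      intro B' hB'
      obtain ⟨B, hB, rfl⟩ := Finset.mem_image.1 hB'
      intro x hx
      obtain ⟨v, _, rfl⟩ := Finset.mem_image.1 hx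
      exact mem_Ico.2 ⟨Nat.zero_le _, v.2⟩)
    (by -- cover
      intro x hx
      rw [mem_Ico] at hx
      refine ⟨(π.part ⟨x, hx.2⟩).image Fin.val,
        Finset.mem_image_of_mem _ (part_mem' π ⟨x, hx.2⟩),
        Finset.mem_image_of_mem _ (mem_part' π ⟨x, hx.2⟩)⟩)
    (by -- uniqueness
      intro B' hB' C' hC' x hxB hxC
      obtain ⟨B, hB, rfl⟩ := Finset.mem_image.1 hB'
      obtain ⟨C, hC, rfl⟩ := Finset.mem_image.1 hC'
      obtain ⟨u, hu, hu'⟩ := Finset.mem_image.1 hxB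
      obtain ⟨v, hv, hv'⟩ := Finset.mem_image.1 hxC
      have huv : u = v := Fin.val_injective (by rw [hu', hv'])
      subst huv
      rw [π.eq_of_mem_parts hB hC hu hv])
    (by -- cardinalities
      intro B' hB'
      obtain ⟨B, hB, rfl⟩ := Finset.mem_image.1 hB'
      rw [Finset.card_image_of_injective _ Fin.val_injective]
      obtain ⟨k, hk⟩ := hπ.1 B hB
      obtain ⟨v, hv⟩ := π.nonempty_of_mem_parts hB
      have : 0 < B.card := Finset.card_pos.2 ⟨v, hv⟩
      omega)
    (by -- alternation
      intro B' hB' x hx y hy hxy hbtw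
      obtain ⟨B, hB, rfl⟩ := Finset.mem_image.1 hB'
      obtain ⟨u, hu, rfl⟩ := Finset.mem_image.1 hx
      obtain ⟨v, hv, rfl⟩ := Finset.mem_image.1 hy
      have huv : u < v := by rwa [Fin.lt_def]
      have hnob : ∀ z ∈ B, ¬(u < z ∧ z < v) := by
        rintro z hz ⟨h1, h2⟩
        exact hbtw z.val (Finset.mem_image_of_mem _ hz)
          ⟨by rwa [← Fin.lt_def], by rwa [← Fin.lt_def]⟩
      exact consec_ne_of_chain' (hπ.2 B hB) hu hv huv hnob)
    (by -- non-crossing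
      intro s₁ t₁ s₂ t₂ h1 h2 h3 hs ht
      obtain ⟨B', hB', hs1, hs2⟩ := hs
      obtain ⟨C', hC', ht1, ht2⟩ := ht
      obtain ⟨B, hB, rfl⟩ := Finset.mem_image.1 hB'
      obtain ⟨C, hC, rfl⟩ := Finset.mem_image.1 hC'
      obtain ⟨u₁, hu₁, hu₁'⟩ := Finset.mem_image.1 hs1
      obtain ⟨u₂, hu₂, hu₂'⟩ := Finset.mem_image.1 hs2
      obtain ⟨v₁, hv₁, hv₁'⟩ := Finset.mem_image.1 ht1
      obtain ⟨v₂, hv₂, hv₂'⟩ := Finset.mem_image.1 ht2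
      have hcross := hNC u₁ v₁ u₂ v₂
        (by rw [Fin.lt_def, hu₁', hv₁']; exact h1)
        (by rw [Fin.lt_def, hv₁', hu₂']; exact h2)
        (by rw [Fin.lt_def, hu₂', hv₂']; exact h3)
        ⟨B, hB, hu₁, hu₂⟩ ⟨C, hC, hv₁, hv₂⟩
      obtain ⟨D, hD, hx1, hx2⟩ := hcross
      exact ⟨D.image Fin.val, Finset.mem_image_of_mem _ hD,
        by rw [← hu₁']; exact Finset.mem_image_of_mem _ hx1,
        by rw [← hv₁']; exact Finset.mem_image_of_mem _ hx2⟩)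
    (by -- nonempty
      refine ⟨(π.part ⟨0, by omega⟩).image Fin.val,
        Finset.mem_image_of_mem _ (part_mem' π _)⟩)
  have hsum : (∑ B' ∈ π.parts.image (fun B => B.image Fin.val), (B'.card - 2))
      = ∑ B ∈ π.parts, (B.card - 2) := by
    rw [Finset.sum_image (fun B _ C _ h => himg_inj h)]
    apply Finset.sum_congr rfl
    intro B _
    rw [Finset.card_image_of_injective _ Fin.val_injective]
  have hsw := sw_epsd d m hd hm
  rw [hsum] at hkey
  omega

lemma two_le_card_part {N : ℕ} {σ : Finpartition (univ : Finset (Fin N))}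
    (heven : EvenPartition σ) (x : Fin N) : 2 ≤ (σ.part x).card := by
  obtain ⟨k, hk⟩ := heven (σ.part x) (part_mem' σ x)
  have : 0 < (σ.part x).card := Finset.card_pos.2 ⟨x, mem_part' σ x⟩
  omega

lemma not_min_and_max {N : ℕ} {σ : Finpartition (univ : Finset (Fin N))}
    (heven : EvenPartition σ) (x : Fin N) : ¬(IsMinB σ x ∧ IsMaxB σ x) := by
  rintro ⟨h1, h2⟩
  have hsub : σ.part x ⊆ {x} := by
    intro y hy
    have := le_antisymm (h2 y hy) (h1 y hy)
    simp [this]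
  have := Finset.card_le_card hsub
  have h2c := two_le_card_part heven x
  simp at this
  omega

lemma part_subset_refines {N : ℕ} {σ π : Finpartition (univ : Finset (Fin N))}
    (href : Refines σ π) (x : Fin N) : σ.part x ⊆ π.part x := by
  obtain ⟨C, hC, hsub⟩ := href (σ.part x) (part_mem' σ x)
  have : C = π.part x := by
    rw [π.part_eq_of_mem hC (hsub (mem_part' σ x))]
  rwa [this] at hsub

lemma isMinB_of_refines {N : ℕ} {σ π : Finpartition (univ : Finset (Fin N))}
    (href : Refines σ π) {x : Fin N} (h : IsMinB π x) : IsMinB σ x :=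
  fun y hy => h y (part_subset_refines href x hy)

lemma isMaxB_of_refines {N : ℕ} {σ π : Finpartition (univ : Finset (Fin N))}
    (href : Refines σ π) {x : Fin N} (h : IsMaxB π x) : IsMaxB σ x :=
  fun y hy => h y (part_subset_refines href x hy)

/-- The cardinality of the set of "interior" elements of blocks of `π`. -/
lemma T_card_le (d m : ℕ) (hd : 1 ≤ d) (hm : 1 ≤ m)
    (π : Finpartition (univ : Finset (Fin (2*d*m))))
    (hNC : NonCrossing π) (hπ : EpsPartition (epsd d m) π) :
    ((univ : Finset (Fin (2*d*m))).filter
      (fun x => ¬ IsMinB π x ∧ ¬ IsMaxB π x)).card ≤ 2*m - 2 := by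
  classical
  have hT : (univ : Finset (Fin (2*d*m))).filter (fun x => ¬ IsMinB π x ∧ ¬ IsMaxB π x)
      = π.parts.biUnion (fun B => B.filter (fun x => ¬ IsMinB π x ∧ ¬ IsMaxB π x)) := by
    ext x
    simp only [Finset.mem_filter, Finset.mem_biUnion, mem_univ, true_and]
    constructor
    · intro h
      exact ⟨π.part x, part_mem' π x, mem_part' π x, h⟩
    · rintro ⟨B, hB, hxB, h⟩
      exact h
  rw [hT, Finset.card_biUnion]
  · have hbound : ∀ B ∈ π.parts,
        (B.filter (fun x => ¬ IsMinB π x ∧ ¬ IsMaxB π x)).card ≤ B.card - 2 := by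
      intro B hB
      have hBne : B.Nonempty := π.nonempty_of_mem_parts hB
      have hB2 : 2 ≤ B.card := by
        obtain ⟨k, hk⟩ := hπ.1 B hB
        have : 0 < B.card := Finset.card_pos.2 hBne
        omega
      have hmm : B.min' hBne < B.max' hBne := Finset.min'_lt_max'_of_card B (by omega)
      have hsub : B.filter (fun x => ¬ IsMinB π x ∧ ¬ IsMaxB π x)
          ⊆ (B.erase (B.min' hBne)).erase (B.max' hBne) := by
        intro x hx
        rw [Finset.mem_filter] at hx
        obtain ⟨hxB, hmin, hmax⟩ := hx
        have hpart : π.part x = B := π.part_eq_of_mem hB hxB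
        refine Finset.mem_erase.2 ⟨?_, Finset.mem_erase.2 ⟨?_, hxB⟩⟩
        · rintro rfl
          exact hmax (fun y hy => by rw [hpart] at hy; exact Finset.le_max' B y hy)
        · rintro rfl
          exact hmin (fun y hy => by rw [hpart] at hy; exact Finset.min'_le B y hy)
      have hcount := Finset.card_le_card hsub
      rw [Finset.card_erase_of_mem (Finset.mem_erase.2 ⟨ne_of_gt hmm, Finset.max'_mem B hBne⟩),
        Finset.card_erase_of_mem (Finset.min'_mem B hBne)] at hcount
      omega
    have hsum := Finset.sum_le_sum hbound
    have hkey := parts_sum_le d m hd hm π hNC hπ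
    omega
  · intro B hB C hC hBC
    rw [Function.onFun, Finset.disjoint_left]
    intro x hxB hxC
    rw [Finset.mem_filter] at hxB hxC
    exact hBC (π.eq_of_mem_parts hB hC hxB.1 hxC.1)

lemma stub_iff_of_code {N : ℕ} {σ σ' : Finpartition (univ : Finset (Fin N))} {x : Fin N}
    (hnb : ¬(IsMinB σ x ∧ IsMaxB σ x)) (hnb' : ¬(IsMinB σ' x ∧ IsMaxB σ' x))
    (h : (if IsMinB σ x then (0 : Fin 3) else if IsMaxB σ x then 1 else 2)
       = (if IsMinB σ' x then (0 : Fin 3) else if IsMaxB σ' x then 1 else 2)) :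
    (IsMinB σ x ↔ IsMinB σ' x) ∧ (IsMaxB σ x ↔ IsMaxB σ' x) := by
  have key : ∀ {A B A' B' : Prop} (_ : Decidable A) (_ : Decidable B) (_ : Decidable A')
      (_ : Decidable B'),
      (if A then (0 : Fin 3) else if B then 1 else 2)
        = (if A' then (0 : Fin 3) else if B' then 1 else 2) → A → A' := by
    intro A B A' B' _ _ _ _ hh hA
    by_contra hA'
    rw [if_pos hA, if_neg hA'] at hh
    by_cases hB' : B'
    · rw [if_pos hB'] at hh; exact absurd hh (by decide)
    · rw [if_neg hB'] at hh; exact absurd hh (by decide)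
  have keyQ : ∀ {A B A' B' : Prop} (_ : Decidable A) (_ : Decidable B) (_ : Decidable A')
      (_ : Decidable B'), ¬(A ∧ B) → ¬(A' ∧ B') →
      (if A then (0 : Fin 3) else if B then 1 else 2)
        = (if A' then (0 : Fin 3) else if B' then 1 else 2) → B → B' := by
    intro A B A' B' _ _ _ _ hn hn' hh hB
    have hA : ¬A := fun hc => hn ⟨hc, hB⟩
    rw [if_neg hA, if_pos hB] at hh
    by_contra hB'
    by_cases hA' : A'
    · rw [if_pos hA'] at hh; exact absurd hh (by decide)
    · rw [if_neg hA', if_neg hB'] at hh; exact absurd hh (by decide)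
  exact ⟨⟨fun hA => key _ _ _ _ h hA, fun hA => key _ _ _ _ h.symm hA⟩,
    ⟨fun hB => keyQ _ _ _ _ hnb hnb' h hB, fun hB => keyQ _ _ _ _ hnb' hnb h.symm hB⟩⟩

end NCAux

/-- second assertion of Lemma 3.6 of the paper: for a non-crossing
`ε_d`-partition `π` of `[2dm]`, the number of non-crossing `ε_d`-partitions `σ ≤ π`
is at most `(3e)^{2m}`. -/
theorem card_epsPartitions_refining_le (d m : ℕ) (hd : 1 ≤ d) (hm : 1 ≤ m)
    (π : Finpartition (univ : Finset (Fin (2*d*m))))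
    (hπNC : NonCrossing π) (hπ : EpsPartition (epsd d m) π) :
    (Nat.card {σ : Finpartition (univ : Finset (Fin (2*d*m))) //
        NonCrossing σ ∧ EpsPartition (epsd d m) σ ∧ Refines σ π} : ℝ) ≤
      (3 * Real.exp 1) ^ (2*m) := by
  classical
  set T := (univ : Finset (Fin (2*d*m))).filter
    (fun x => ¬ NCAux.IsMinB π x ∧ ¬ NCAux.IsMaxB π x) with hTdef
  have hTcard : T.card ≤ 2*m - 2 := NCAux.T_card_le d m hd hm π hπNC hπ
  set code : {σ : Finpartition (univ : Finset (Fin (2*d*m))) //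
      NonCrossing σ ∧ EpsPartition (epsd d m) σ ∧ Refines σ π} → ({x // x ∈ T} → Fin 3) :=
    fun σ t => if NCAux.IsMinB σ.1 t.1 then 0 else if NCAux.IsMaxB σ.1 t.1 then 1 else 2
    with hcode
  have hinj : Function.Injective code := by
    rintro ⟨σ, hσNC, hσeps, hσref⟩ ⟨σ', hσNC', hσeps', hσref'⟩ h
    have hnb : ∀ x, ¬(NCAux.IsMinB σ x ∧ NCAux.IsMaxB σ x) :=
      fun x => NCAux.not_min_and_max hσeps.1 x
    have hnb' : ∀ x, ¬(NCAux.IsMinB σ' x ∧ NCAux.IsMaxB σ' x) :=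
      fun x => NCAux.not_min_and_max hσeps'.1 x
    have hstub : ∀ x, (NCAux.IsMinB σ x ↔ NCAux.IsMinB σ' x) ∧
        (NCAux.IsMaxB σ x ↔ NCAux.IsMaxB σ' x) := by
      intro x
      by_cases hxT : x ∈ T
      · have h' := congrFun h ⟨x, hxT⟩
        simp only [hcode] at h'
        exact NCAux.stub_iff_of_code (hnb x) (hnb' x) h'
      · rw [hTdef, Finset.mem_filter] at hxT
        have hxT' : NCAux.IsMinB π x ∨ NCAux.IsMaxB π x := by
          by_contra hc
          push_neg at hc
          exact hxT ⟨mem_univ x, hc.1, hc.2⟩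
        rcases hxT' with hpm | hpm
        · have a1 : NCAux.IsMinB σ x := NCAux.isMinB_of_refines hσref hpm
          have a1' : NCAux.IsMinB σ' x := NCAux.isMinB_of_refines hσref' hpm
          have a2 : ¬ NCAux.IsMaxB σ x := fun hc => hnb x ⟨a1, hc⟩
          have a2' : ¬ NCAux.IsMaxB σ' x := fun hc => hnb' x ⟨a1', hc⟩
          exact ⟨iff_of_true a1 a1', iff_of_false a2 a2'⟩
        · have a1 : NCAux.IsMaxB σ x := NCAux.isMaxB_of_refines hσref hpm
          have a1' : NCAux.IsMaxB σ' x := NCAux.isMaxB_of_refines hσref' hpm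
          have a2 : ¬ NCAux.IsMinB σ x := fun hc => hnb x ⟨hc, a1⟩
          have a2' : ¬ NCAux.IsMinB σ' x := fun hc => hnb' x ⟨hc, a1'⟩
          exact ⟨iff_of_false a2 a2', iff_of_true a1 a1'⟩
    exact Subtype.ext (NCAux.eq_of_same_stubs hσNC hσNC'
      (fun x => (hstub x).1) (fun x => (hstub x).2))
  have hcard2 : Nat.card ({x // x ∈ T} → Fin 3) = 3 ^ T.card := by
    rw [Nat.card_eq_fintype_card, Fintype.card_fun, Fintype.card_fin, Fintype.card_coe]
  have hcard1 : Nat.card {σ : Finpartition (univ : Finset (Fin (2*d*m))) //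
      NonCrossing σ ∧ EpsPartition (epsd d m) σ ∧ Refines σ π} ≤ 3 ^ T.card := by
    have h1 := Nat.card_le_card_of_injective code hinj
    rwa [hcard2] at h1
  have hexp1 : (1 : ℝ) ≤ Real.exp 1 := by
    rw [← Real.exp_zero]
    exact Real.exp_le_exp.2 (by norm_num)
  calc (Nat.card {σ : Finpartition (univ : Finset (Fin (2*d*m))) //
        NonCrossing σ ∧ EpsPartition (epsd d m) σ ∧ Refines σ π} : ℝ)
      ≤ ((3 ^ T.card : ℕ) : ℝ) := by exact_mod_cast hcard1
    _ = (3 : ℝ) ^ T.card := by push_cast; ring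
    _ ≤ (3 : ℝ) ^ (2*m) := pow_le_pow_right₀ (by norm_num) (by omega)
    _ ≤ (3 * Real.exp 1) ^ (2*m) := by
        apply pow_le_pow_left₀ (by norm_num)
        nlinarith [hexp1]
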